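/- arXiv:2210.15290 — 2 statements merged into one kernel-verified Lean document; each statement's English description precedes it below -/
import Mathlib

section
/- Under the bilinear regression model Y = X M* Z + E with ‖X M* Z‖_∞ ≤ C, ‖XMZ‖ entries clipped via Π_C, and entries E_{ij} independent with mean zero satisfying E[|E_{ij}|^k] ≤ σ² k! ξ^{k−2}/2 for k ≥ 2, set T_{ij} = (Y_{ij} − (XM*Z)_{ij})² − (Y_{ij} − (Π_C(XMZ))_{ij})². Then Σ_{ij} E[T_{ij}²] ≤ 8(σ² + C²)·Σ_{ij}((XM*Z)_{ij} − (Π_C(XMZ))_{ij})². -/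
open MeasureTheory Finset

/-- **Variance bound in the PAC-Bayes proof for bilinear regression.** With
`Y = X M* Z + E`, independent centered noise entries satisfying the
sub-exponential moment condition, `‖X M* Z‖_∞ ≤ C`, and
`T_{ij} = (Y_{ij} − (XM*Z)_{ij})² − (Y_{ij} − (Π_C(XMZ))_{ij})²`, we have
`∑_{ij} E[T_{ij}²] ≤ 8(σ² + C²) ∑_{ij} ((XM*Z)_{ij} − (Π_C(XMZ))_{ij})²`. -/
theorem pac_bayes_variance_bound
    {Ω : Type*} [MeasurableSpace Ω] (μ : Measure Ω) [IsProbabilityMeasure μ]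
    {n q p k : ℕ}
    (X : Matrix (Fin n) (Fin p) ℝ) (Z : Matrix (Fin k) (Fin q) ℝ)
    (Mstar M : Matrix (Fin p) (Fin k) ℝ)
    (En : Ω → Matrix (Fin n) (Fin q) ℝ)
    (hmeas : ∀ i j, Measurable (fun ω => En ω i j))
    (hindep : ProbabilityTheory.iIndepFun
      (fun (ij : Fin n × Fin q) ω => En ω ij.1 ij.2) μ)
    (hint : ∀ i j (r : ℕ), Integrable (fun ω => |En ω i j| ^ r) μ)
    (hmean : ∀ i j, ∫ ω, En ω i j ∂μ = 0)
    (σ ξ : ℝ) (hσ : 0 < σ) (hξ : 0 < ξ)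
    (hmom : ∀ i j, ∀ r : ℕ, 2 ≤ r →
      ∫ ω, |En ω i j| ^ r ∂μ ≤ σ ^ 2 * (Nat.factorial r) * ξ ^ (r - 2) / 2)
    (Y : Ω → Matrix (Fin n) (Fin q) ℝ) (hY : ∀ ω, Y ω = X * Mstar * Z + En ω)
    (C : ℝ) (hC : 0 < C)
    (hCbound : ∀ i j, |(X * Mstar * Z) i j| ≤ C)
    (clip : Matrix (Fin n) (Fin q) ℝ → Matrix (Fin n) (Fin q) ℝ)
    (hclip : ∀ A i j, clip A i j = max (-C) (min C (A i j)))
    (T : Fin n → Fin q → Ω → ℝ)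
    (hT : ∀ i j ω, T i j ω = (Y ω i j - (X * Mstar * Z) i j) ^ 2
        - (Y ω i j - clip (X * M * Z) i j) ^ 2) :
    ∑ i, ∑ j, ∫ ω, (T i j ω) ^ 2 ∂μ
      ≤ 8 * (σ ^ 2 + C ^ 2) *
        ∑ i, ∑ j, ((X * Mstar * Z) i j - clip (X * M * Z) i j) ^ 2 := by

  have key : ∀ i j, ∫ ω, (T i j ω) ^ 2 ∂μ
      ≤ 8 * (σ ^ 2 + C ^ 2) * ((X * Mstar * Z) i j - clip (X * M * Z) i j) ^ 2 := by
    intro i j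
    set a := (X * Mstar * Z) i j with ha
    set b := clip (X * M * Z) i j with hb
    set d := a - b with hd
    have hEint : Integrable (fun ω => En ω i j) μ := by
      exact (hint i j 1).mono' (hmeas i j).aestronglyMeasurable
        (Filter.Eventually.of_forall fun ω => by simp [Real.norm_eq_abs])
    have hE2int : Integrable (fun ω => (En ω i j) ^ 2) μ := by
      have h2 := hint i j 2
      simpa [sq_abs] using h2
    have hTrw : ∀ ω, (T i j ω) ^ 2 = (4 * d ^ 2 * (En ω i j) ^ 2 + 4 * d ^ 3 * (En ω i j)) + d ^ 4 := by
      intro ω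
      rw [hT, hY]
      simp only [Matrix.add_apply, ← ha, ← hb]
      ring
    have hIT : ∫ ω, (T i j ω) ^ 2 ∂μ = 4 * d ^ 2 * (∫ ω, (En ω i j) ^ 2 ∂μ) + d ^ 4 := by
      have hf1 : Integrable (fun ω => 4 * d ^ 2 * En ω i j ^ 2 + 4 * d ^ 3 * En ω i j) μ :=
        (hE2int.const_mul _).add (hEint.const_mul _)
      simp_rw [hTrw]
      rw [integral_add hf1 (integrable_const _),
        integral_add (hE2int.const_mul _) (hEint.const_mul _),
        integral_const_mul, integral_const_mul, hmean, integral_const]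
      simp
    have hE2 : ∫ ω, (En ω i j) ^ 2 ∂μ ≤ σ ^ 2 := by
      have := hmom i j 2 le_rfl
      simp [sq_abs, Nat.factorial] at this
      calc ∫ ω, (En ω i j) ^ 2 ∂μ = ∫ ω, |En ω i j| ^ 2 ∂μ := by simp [sq_abs]
        _ ≤ σ ^ 2 * (Nat.factorial 2) * ξ ^ (2 - 2) / 2 := hmom i j 2 le_rfl
        _ = σ ^ 2 := by norm_num [Nat.factorial]
    have hbB : |b| ≤ C := by
      rw [hb, hclip, abs_le]
      constructor
      · exact le_max_left _ _
      · exact max_le (by linarith) (min_le_left _ _)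
    have hdB : |d| ≤ 2 * C := by
      calc |d| ≤ |a| + |b| := abs_sub a b
        _ ≤ 2 * C := by have := hCbound i j; rw [← ha] at this; linarith
    have hd2 : d ^ 2 ≤ 4 * C ^ 2 := by
      calc d ^ 2 = |d| ^ 2 := (sq_abs d).symm
        _ ≤ (2 * C) ^ 2 := by
            apply pow_le_pow_left₀ (abs_nonneg d) hdB
        _ = 4 * C ^ 2 := by ring
    have hE2nn : 0 ≤ ∫ ω, (En ω i j) ^ 2 ∂μ := integral_nonneg fun ω => sq_nonneg _
    rw [hIT]
    nlinarith [sq_nonneg d, sq_nonneg (d ^ 2), sq_nonneg C]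
  calc ∑ i, ∑ j, ∫ ω, (T i j ω) ^ 2 ∂μ
      ≤ ∑ i, ∑ j, 8 * (σ ^ 2 + C ^ 2) * ((X * Mstar * Z) i j - clip (X * M * Z) i j) ^ 2 := by
        exact sum_le_sum fun i _ => sum_le_sum fun j _ => key i j
    _ = 8 * (σ ^ 2 + C ^ 2) *
        ∑ i, ∑ j, ((X * Mstar * Z) i j - clip (X * M * Z) i j) ^ 2 := by
        simp_rw [← mul_sum]
end

section
/- Under the same setup, for every integer k ≥ 3, Σ_{ij} E[T_{ij}^k] ≤ v·k!·C₂^{k−2}/2, where v = 8(σ²+C²)·Σ_{ij}((XM*Z)_{ij} − (Π_C(XMZ))_{ij})² and C₂ = 64·C·max(ξ, C). -/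
open MeasureTheory Finset

lemma key_bound {Ω : Type*} [MeasurableSpace Ω] (μ : Measure Ω) [IsProbabilityMeasure μ]
    (E : Ω → ℝ) (hmeasE : Measurable E)
    (hintE : ∀ r : ℕ, Integrable (fun ω => |E ω| ^ r) μ)
    (σ ξ C d : ℝ) (hσ : 0 < σ) (hξ : 0 < ξ) (hC : 0 < C)
    (hmom : ∀ r : ℕ, 2 ≤ r →
      ∫ ω, |E ω| ^ r ∂μ ≤ σ ^ 2 * (Nat.factorial r) * ξ ^ (r - 2) / 2)
    (hd : |d| ≤ 2 * C) (r : ℕ) (hr : 3 ≤ r) :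
    ∫ ω, (-(d * (2 * E ω + d))) ^ r ∂μ
      ≤ d ^ 2 * (8 * (σ ^ 2 + C ^ 2) * (Nat.factorial r) * (64 * C * max ξ C) ^ (r - 2) / 2) := by
  set m := max ξ C with hm
  have hmC : C ≤ m := le_max_right _ _
  have hmξ : ξ ≤ m := le_max_left _ _
  have hm0 : 0 < m := lt_of_lt_of_le hC hmC
  have hr2 : 2 + (r - 2) = r := by omega
  have hfact : (2:ℝ) ≤ (Nat.factorial r : ℝ) := by
    have : 2 ≤ Nat.factorial r := by
      calc 2 ≤ Nat.factorial 3 := by norm_num [Nat.factorial]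
        _ ≤ Nat.factorial r := Nat.factorial_le hr
    exact_mod_cast this
  -- pointwise bound on |T^r|
  have hpt : ∀ ω, |(-(d * (2 * E ω + d))) ^ r|
      ≤ d ^ 2 * (2 * C) ^ (r - 2) * 4 ^ r * (|E ω| ^ r + C ^ r) := by
    intro ω
    set e := E ω with he
    have hE0 : (0:ℝ) ≤ |e| ^ r := pow_nonneg (abs_nonneg e) r
    have hC0 : (0:ℝ) ≤ C ^ r := pow_nonneg hC.le r
    have h1 : |(-(d * (2 * e + d)))| ≤ |d| * (2 * |e| + 2 * C) := by
      rw [abs_neg, abs_mul]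
      have h2 : |2 * e + d| ≤ 2 * |e| + 2 * C := by
        have h3 := abs_add_le (2 * e) d
        rw [abs_mul] at h3
        have h4 : |(2:ℝ)| = 2 := by norm_num
        rw [h4] at h3
        linarith
      exact mul_le_mul_of_nonneg_left h2 (abs_nonneg d)
    have hmaxpow : (max |e| C) ^ r ≤ |e| ^ r + C ^ r := by
      rcases max_cases |e| C with ⟨h1', _⟩ | ⟨h1', _⟩ <;> rw [h1'] <;> linarith
    calc |(-(d * (2 * e + d))) ^ r| = |(-(d * (2 * e + d)))| ^ r := abs_pow _ _
      _ ≤ (|d| * (2 * |e| + 2 * C)) ^ r :=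
          pow_le_pow_left₀ (abs_nonneg _) h1 r
      _ = |d| ^ r * (2 * |e| + 2 * C) ^ r := mul_pow _ _ _
      _ = |d| ^ 2 * |d| ^ (r - 2) * (2 * |e| + 2 * C) ^ r := by
          rw [← pow_add, hr2]
      _ ≤ |d| ^ 2 * (2 * C) ^ (r - 2) * (4 * max |e| C) ^ r := by
          gcongr <;>
            first
              | exact abs_nonneg d
              | exact hd
              | linarith [le_max_left |e| C, le_max_right |e| C, abs_nonneg e]
      _ = d ^ 2 * (2 * C) ^ (r - 2) * (4 ^ r * (max |e| C) ^ r) := by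
          rw [sq_abs]; ring
      _ ≤ d ^ 2 * (2 * C) ^ (r - 2) * (4 ^ r * (|e| ^ r + C ^ r)) := by
          refine mul_le_mul_of_nonneg_left ?_ (by positivity)
          exact mul_le_mul_of_nonneg_left hmaxpow (by positivity)
      _ = d ^ 2 * (2 * C) ^ (r - 2) * 4 ^ r * (|e| ^ r + C ^ r) := by ring
  have hInt2 : Integrable (fun ω => d ^ 2 * (2 * C) ^ (r - 2) * 4 ^ r * (|E ω| ^ r + C ^ r)) μ :=
    ((hintE r).add (integrable_const _)).const_mul _
  have hIntT : Integrable (fun ω => (-(d * (2 * E ω + d))) ^ r) μ := by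
    refine hInt2.mono' ?_ ?_
    · exact (((measurable_const.mul ((measurable_const.mul hmeasE).add measurable_const)).neg.pow_const r)).aestronglyMeasurable
    · filter_upwards with ω using hpt ω
  have step1 : ∫ ω, (-(d * (2 * E ω + d))) ^ r ∂μ
      ≤ ∫ ω, d ^ 2 * (2 * C) ^ (r - 2) * 4 ^ r * (|E ω| ^ r + C ^ r) ∂μ :=
    integral_mono hIntT hInt2 (fun ω => le_trans (le_abs_self _) (hpt ω))
  have step2 : ∫ ω, d ^ 2 * (2 * C) ^ (r - 2) * 4 ^ r * (|E ω| ^ r + C ^ r) ∂μ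
      = d ^ 2 * (2 * C) ^ (r - 2) * 4 ^ r * ((∫ ω, |E ω| ^ r ∂μ) + C ^ r) := by
    rw [integral_const_mul, integral_add (hintE r) (integrable_const _)]
    simp
  have hEr : ∫ ω, |E ω| ^ r ∂μ ≤ σ ^ 2 * (Nat.factorial r) * m ^ (r - 2) / 2 := by
    refine le_trans (hmom r (by omega)) ?_
    gcongr <;> first | positivity | exact hξ.le | exact hmξ
  have hCr : C ^ r ≤ C ^ 2 * (Nat.factorial r) * m ^ (r - 2) / 2 := by
    have h1 : C ^ r = C ^ 2 * C ^ (r - 2) := by rw [← pow_add, hr2]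
    have h2 : C ^ (r - 2) ≤ m ^ (r - 2) := pow_le_pow_left₀ hC.le hmC _
    have h3 : (0:ℝ) < C ^ 2 := by positivity
    have h6 : (1:ℝ) ≤ (Nat.factorial r : ℝ) / 2 := by linarith
    calc C ^ r = C ^ 2 * C ^ (r - 2) := h1
      _ ≤ C ^ 2 * m ^ (r - 2) := mul_le_mul_of_nonneg_left h2 h3.le
      _ = C ^ 2 * m ^ (r - 2) * 1 := by ring
      _ ≤ C ^ 2 * m ^ (r - 2) * ((Nat.factorial r : ℝ) / 2) := by
          refine mul_le_mul_of_nonneg_left h6 (by positivity)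
      _ = C ^ 2 * (Nat.factorial r) * m ^ (r - 2) / 2 := by ring
  have hsum : (∫ ω, |E ω| ^ r ∂μ) + C ^ r
      ≤ (σ ^ 2 + C ^ 2) * (Nat.factorial r) * m ^ (r - 2) / 2 := by
    have heq : σ ^ 2 * (Nat.factorial r : ℝ) * m ^ (r - 2) / 2
        + C ^ 2 * (Nat.factorial r : ℝ) * m ^ (r - 2) / 2
        = (σ ^ 2 + C ^ 2) * (Nat.factorial r) * m ^ (r - 2) / 2 := by ring
    linarith
  have hkey : (2 * C) ^ (r - 2) * 4 ^ r * m ^ (r - 2) ≤ 8 * (64 * C * m) ^ (r - 2) := by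
    have h4 : (4:ℝ) ^ r = 16 * 4 ^ (r - 2) := by
      rw [← hr2, pow_add]; norm_num
    have h5 : (2 * C) ^ (r - 2) * (4:ℝ) ^ (r - 2) * m ^ (r - 2) = (8 * C * m) ^ (r - 2) := by
      rw [← mul_pow, ← mul_pow]; ring_nf
    have h6 : (64 * C * m) ^ (r - 2) = 8 ^ (r - 2) * (8 * C * m) ^ (r - 2) := by
      rw [← mul_pow]; ring_nf
    have h7 : (8:ℝ) ≤ 8 ^ (r - 2) := by
      calc (8:ℝ) = 8 ^ 1 := (pow_one 8).symm
        _ ≤ 8 ^ (r - 2) := pow_le_pow_right₀ (by norm_num) (by omega)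
    have h8 : (0:ℝ) ≤ (8 * C * m) ^ (r - 2) := by positivity
    have h9 := mul_le_mul_of_nonneg_right h7 h8
    calc (2 * C) ^ (r - 2) * 4 ^ r * m ^ (r - 2)
        = 16 * ((2 * C) ^ (r - 2) * 4 ^ (r - 2) * m ^ (r - 2)) := by rw [h4]; ring
      _ = 16 * (8 * C * m) ^ (r - 2) := by rw [h5]
      _ ≤ 8 * (8 ^ (r - 2) * (8 * C * m) ^ (r - 2)) := by linarith
      _ = 8 * (64 * C * m) ^ (r - 2) := by rw [← h6]
  have hA : (0:ℝ) ≤ d ^ 2 * ((σ ^ 2 + C ^ 2) * (Nat.factorial r) / 2) := by positivity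
  calc ∫ ω, (-(d * (2 * E ω + d))) ^ r ∂μ
      ≤ d ^ 2 * (2 * C) ^ (r - 2) * 4 ^ r * ((∫ ω, |E ω| ^ r ∂μ) + C ^ r) := by
        rw [← step2]; exact step1
    _ ≤ d ^ 2 * (2 * C) ^ (r - 2) * 4 ^ r
        * ((σ ^ 2 + C ^ 2) * (Nat.factorial r) * m ^ (r - 2) / 2) :=
        mul_le_mul_of_nonneg_left hsum (by positivity)
    _ = (d ^ 2 * ((σ ^ 2 + C ^ 2) * (Nat.factorial r) / 2))
        * ((2 * C) ^ (r - 2) * 4 ^ r * m ^ (r - 2)) := by ring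
    _ ≤ (d ^ 2 * ((σ ^ 2 + C ^ 2) * (Nat.factorial r) / 2))
        * (8 * (64 * C * m) ^ (r - 2)) := mul_le_mul_of_nonneg_left hkey hA
    _ = d ^ 2 * (8 * (σ ^ 2 + C ^ 2) * (Nat.factorial r) * (64 * C * m) ^ (r - 2) / 2) := by ring


/-- **Higher-moment bound in the PAC-Bayes proof for bilinear regression.**
With `T_{ij} = (Y_{ij} − (XM*Z)_{ij})² − (Y_{ij} − (Π_C(XMZ))_{ij})²`, for
every integer `r ≥ 3`,
`∑_{ij} E[T_{ij}^r] ≤ v · r! · C₂^{r−2} / 2`, where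
`v = 8(σ²+C²) ∑_{ij} ((XM*Z)_{ij} − (Π_C(XMZ))_{ij})²` and
`C₂ = 64 C max(ξ, C)`. -/
theorem pac_bayes_higher_moment_bound
    {Ω : Type*} [MeasurableSpace Ω] (μ : Measure Ω) [IsProbabilityMeasure μ]
    {n q p k : ℕ}
    (X : Matrix (Fin n) (Fin p) ℝ) (Z : Matrix (Fin k) (Fin q) ℝ)
    (Mstar M : Matrix (Fin p) (Fin k) ℝ)
    (En : Ω → Matrix (Fin n) (Fin q) ℝ)
    (hmeas : ∀ i j, Measurable (fun ω => En ω i j))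
    (hindep : ProbabilityTheory.iIndepFun
      (fun (ij : Fin n × Fin q) ω => En ω ij.1 ij.2) μ)
    (hint : ∀ i j (r : ℕ), Integrable (fun ω => |En ω i j| ^ r) μ)
    (hmean : ∀ i j, ∫ ω, En ω i j ∂μ = 0)
    (σ ξ : ℝ) (hσ : 0 < σ) (hξ : 0 < ξ)
    (hmom : ∀ i j, ∀ r : ℕ, 2 ≤ r →
      ∫ ω, |En ω i j| ^ r ∂μ ≤ σ ^ 2 * (Nat.factorial r) * ξ ^ (r - 2) / 2)
    (Y : Ω → Matrix (Fin n) (Fin q) ℝ) (hY : ∀ ω, Y ω = X * Mstar * Z + En ω)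
    (C : ℝ) (hC : 0 < C)
    (hCbound : ∀ i j, |(X * Mstar * Z) i j| ≤ C)
    (clip : Matrix (Fin n) (Fin q) ℝ → Matrix (Fin n) (Fin q) ℝ)
    (hclip : ∀ A i j, clip A i j = max (-C) (min C (A i j)))
    (T : Fin n → Fin q → Ω → ℝ)
    (hT : ∀ i j ω, T i j ω = (Y ω i j - (X * Mstar * Z) i j) ^ 2
        - (Y ω i j - clip (X * M * Z) i j) ^ 2)
    (v C₂ : ℝ)
    (hv : v = 8 * (σ ^ 2 + C ^ 2) *
      ∑ i, ∑ j, ((X * Mstar * Z) i j - clip (X * M * Z) i j) ^ 2)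
    (hC₂ : C₂ = 64 * C * max ξ C) :
    ∀ r : ℕ, 3 ≤ r →
      ∑ i, ∑ j, ∫ ω, (T i j ω) ^ r ∂μ
        ≤ v * (Nat.factorial r) * C₂ ^ (r - 2) / 2 := by
  intro r hr
  set K : ℝ := 8 * (σ ^ 2 + C ^ 2) * (Nat.factorial r) * (64 * C * max ξ C) ^ (r - 2) / 2
    with hK
  have hterm : ∀ i j, ∫ ω, (T i j ω) ^ r ∂μ
      ≤ ((X * Mstar * Z) i j - clip (X * M * Z) i j) ^ 2 * K := by
    intro i j
    set d : ℝ := (X * Mstar * Z) i j - clip (X * M * Z) i j with hdd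
    have hb : |clip (X * M * Z) i j| ≤ C := by
      rw [hclip, abs_le]
      constructor
      · exact le_max_left _ _
      · exact max_le (by linarith) (min_le_left _ _)
    have hd : |d| ≤ 2 * C := by
      calc |d| = |(X * Mstar * Z) i j + -(clip (X * M * Z) i j)| := by
            rw [hdd, sub_eq_add_neg]
        _ ≤ |(X * Mstar * Z) i j| + |(-(clip (X * M * Z) i j))| := abs_add_le _ _
        _ = |(X * Mstar * Z) i j| + |clip (X * M * Z) i j| := by rw [abs_neg]
        _ ≤ C + C := add_le_add (hCbound i j) hb
        _ = 2 * C := by ring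
    have hform : ∀ ω, T i j ω = -(d * (2 * En ω i j + d)) := by
      intro ω
      have hYij : Y ω i j = (X * Mstar * Z) i j + En ω i j := by
        rw [hY]; simp [Matrix.add_apply]
      rw [hT, hYij, hdd]; ring
    have : (fun ω => (T i j ω) ^ r) = fun ω => (-(d * (2 * En ω i j + d))) ^ r := by
      funext ω; rw [hform]
    rw [this]
    exact key_bound μ (fun ω => En ω i j) (hmeas i j) (hint i j) σ ξ C d hσ hξ hC
      (hmom i j) hd r hr
  have hsum : ∑ i, ∑ j, ∫ ω, (T i j ω) ^ r ∂μ
      ≤ ∑ i, ∑ j, ((X * Mstar * Z) i j - clip (X * M * Z) i j) ^ 2 * K :=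
    Finset.sum_le_sum fun i _ => Finset.sum_le_sum fun j _ => hterm i j
  calc ∑ i, ∑ j, ∫ ω, (T i j ω) ^ r ∂μ
      ≤ ∑ i, ∑ j, ((X * Mstar * Z) i j - clip (X * M * Z) i j) ^ 2 * K := hsum
    _ = (∑ i, ∑ j, ((X * Mstar * Z) i j - clip (X * M * Z) i j) ^ 2) * K := by
        rw [Finset.sum_mul]
        exact Finset.sum_congr rfl fun i _ => (Finset.sum_mul _ _ _).symm
    _ = v * (Nat.factorial r) * C₂ ^ (r - 2) / 2 := by
        rw [hv, hC₂, hK]; ring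
end
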